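/- arXiv:1507.06370 — 4 statements merged into one kernel-verified Lean document; each statement's English description precedes it below -/
import Mathlib

section
/- There exists an absolute constant C such that the following holds. Let p, n, k be positive integers, γ ≥ 1, τ ≥ 1 and ε ∈ (0,1), with p ≥ γn and k ≥ C·γ·τ·√n. Suppose X₁,…,X_p ∈ ℝ^n satisfy the pseudorandomness condition with parameter τ and slack ε. Then the p×p matrix (M̃(x_i x_j))_{i,j∈[p]} = ((γk/p²)·⟨X_i,X_j⟩)_{i,j∈[p]} is positive semidefinite and satisfies: (a) Σ_{i,j∈[p]} |M̃(x_i x_j)| ≤ k²/2; (b) the objective value Σ_{i,j∈[p]} M̃(x_i x_j)·(1/n)⟨X_i,X_j⟩ is at least (1 − ε)·γk; (c) M̃(x_i²) = γkn/p² ≤ k/p for every i; (d) |M̃(x_i x_j)| ≤ γkτ√n/p² for all i ≠ j. -/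
open scoped BigOperators Matrix

noncomputable section

/-- Euclidean inner product on `ℝⁿ`. -/
def dotR {n : ℕ} (x y : Fin n → ℝ) : ℝ := ∑ a, x a * y a

/-- The pseudorandomness condition (P1)-(P7) on the (scaled) data vectors `X₁, …, X_p ∈ ℝⁿ`,
with parameter `τ ≥ 1` and slack `ε ∈ (0,1)`. -/
def PseudoRandom (n p : ℕ) (X : Fin p → Fin n → ℝ) (τ ε : ℝ) : Prop :=
  (∀ i, dotR (X i) (X i) = n) ∧
  (∀ i j, i ≠ j → |dotR (X i) (X j)| ≤ τ * Real.sqrt n) ∧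
  (∀ i j, i ≠ j →
    |∑ l ∈ Finset.univ \ {i, j}, (dotR (X i) (X l)) ^ 3 * dotR (X j) (X l)| ≤
      τ * (n : ℝ) ^ ((3 : ℝ) / 2) * p) ∧
  (∀ i j s t : Fin p, i ≠ j → i ≠ s → i ≠ t → j ≠ s → j ≠ t → s ≠ t →
    |∑ l, dotR (X i) (X l) * dotR (X j) (X l) * dotR (X s) (X l) * dotR (X t) (X l)| ≤
      τ * (n : ℝ) ^ 2 * Real.sqrt p) ∧
  (∀ s t, s ≠ t → |∑ i, dotR (X i) (X s) * dotR (X i) (X t)| ≤ τ * Real.sqrt n * p) ∧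
  (∀ s t, s ≠ t →
    |∑ i, ∑ l, (dotR (X i) (X l)) ^ 2 * dotR (X s) (X l) * dotR (X t) (X l)| ≤
      τ * (n : ℝ) ^ ((3 : ℝ) / 2) * (p : ℝ) ^ 2) ∧
  ((1 - ε) * n * (p : ℝ) ^ 2 ≤ ∑ i, ∑ j, (dotR (X i) (X j)) ^ 2)

/-- The degree-2 pseudo-moments `M̃(x_i x_j) = (γ k / p²) ⟨X_i, X_j⟩`. -/
def tM (n p : ℕ) (X : Fin p → Fin n → ℝ) (γ k : ℝ) (i j : Fin p) : ℝ :=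
  γ * k / (p : ℝ) ^ 2 * dotR (X i) (X j)

lemma smul_posSemidef {m : Type*} [Fintype m] {M : Matrix m m ℝ} (hM : M.PosSemidef)
    {c : ℝ} (hc : 0 ≤ c) : (c • M).PosSemidef := by
  refine ⟨?_, fun x => ?_⟩
  · unfold Matrix.IsHermitian
    rw [Matrix.conjTranspose_smul, hM.1]
    simp
  · exact (hM.smul hc).2 x

/-- Lemma `lem:M2`: properties of the degree-2 pseudo-moments `M̃` under the
pseudorandomness condition. -/
theorem tM_properties :
    ∃ C : ℝ, 0 < C ∧
      ∀ (n p k : ℕ) (γ τ ε : ℝ),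
        0 < n → 0 < p → 0 < k →
        1 ≤ γ → 1 ≤ τ → 0 < ε → ε < 1 →
        γ * n ≤ (p : ℝ) → C * γ * τ * Real.sqrt n ≤ (k : ℝ) →
        ∀ X : Fin p → Fin n → ℝ, PseudoRandom n p X τ ε →
        (Matrix.of fun i j => tM n p X γ k i j).PosSemidef ∧
        (∑ i, ∑ j, |tM n p X γ k i j|) ≤ (k : ℝ) ^ 2 / 2 ∧
        (1 - ε) * γ * k ≤
          (∑ i, ∑ j, tM n p X γ k i j * (1 / (n : ℝ) * dotR (X i) (X j))) ∧
        (∀ i, tM n p X γ k i i = γ * k * n / (p : ℝ) ^ 2 ∧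
          γ * k * n / (p : ℝ) ^ 2 ≤ (k : ℝ) / p) ∧
        (∀ i j, i ≠ j → |tM n p X γ k i j| ≤ γ * k * τ * Real.sqrt n / (p : ℝ) ^ 2) := by
  refine ⟨4, by norm_num, ?_⟩
  intro n p k γ τ ε hn hp hk hγ hτ hε hε1 hγn hkC X hPR
  obtain ⟨h1, h2, -, -, -, -, h7⟩ := hPR
  have hp' : (0:ℝ) < p := by exact_mod_cast hp
  have hn' : (0:ℝ) < n := by exact_mod_cast hn
  have hpne : (p:ℝ) ≠ 0 := hp'.ne'
  have hnne : (n:ℝ) ≠ 0 := hn'.ne'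
  have hk' : (0:ℝ) < k := by exact_mod_cast hk
  have hs1 : (1:ℝ) ≤ Real.sqrt n := by
    rw [show (1:ℝ) = Real.sqrt 1 by simp]
    exact Real.sqrt_le_sqrt (by exact_mod_cast hn)
  have hk4 : (4:ℝ) ≤ k := by
    have h1a : (1:ℝ) ≤ γ * τ := by nlinarith
    have h1b : (1:ℝ) ≤ γ * τ * Real.sqrt n := by nlinarith
    nlinarith
  set c := γ * (k:ℝ) / (p:ℝ)^2 with hcdef
  have hc : 0 ≤ c := by positivity
  refine ⟨?_, ?_, ?_, ?_, ?_⟩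
  · have hM : (Matrix.of fun i j => tM n p X γ k i j)
        = c • ((Matrix.of fun (a : Fin n) (i : Fin p) => X i a)ᴴ
            * (Matrix.of fun (a : Fin n) (i : Fin p) => X i a)) := by
      ext i j
      simp [tM, Matrix.mul_apply, dotR, Finset.mul_sum, hcdef]
    rw [hM]
    exact smul_posSemidef (Matrix.posSemidef_conjTranspose_mul_self _) hc
  · -- (a)
    have key : ∀ i : Fin p, ∑ j, |tM n p X γ k i j| ≤ c * n + p * (c * (τ * Real.sqrt n)) := by
      intro i
      rw [← Finset.add_sum_erase _ _ (Finset.mem_univ i)]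
      have hdiag : |tM n p X γ k i i| = c * n := by
        rw [tM, h1 i, abs_mul, abs_of_nonneg hc, abs_of_nonneg hn'.le]
      have hoff : ∑ j ∈ Finset.univ.erase i, |tM n p X γ k i j| ≤ (p:ℝ) * (c * (τ * Real.sqrt n)) := by
        have h1' : ∑ j ∈ Finset.univ.erase i, |tM n p X γ k i j|
            ≤ (Finset.univ.erase i).card • (c * (τ * Real.sqrt n)) := by
          apply Finset.sum_le_card_nsmul
          intro j hj
          have hji : j ≠ i := Finset.ne_of_mem_erase hj
          rw [tM, abs_mul, abs_of_nonneg hc]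
          exact mul_le_mul_of_nonneg_left (h2 i j (Ne.symm hji)) hc
        refine h1'.trans ?_
        rw [nsmul_eq_mul]
        have hcard : ((Finset.univ.erase i).card : ℝ) ≤ p := by
          have := Finset.card_erase_le (a := i) (s := (Finset.univ : Finset (Fin p)))
          calc ((Finset.univ.erase i).card : ℝ) ≤ (Finset.univ : Finset (Fin p)).card := by exact_mod_cast this
            _ = p := by simp
        exact mul_le_mul_of_nonneg_right hcard (by positivity)
      rw [hdiag]
      exact add_le_add le_rfl hoff
    calc ∑ i, ∑ j, |tM n p X γ k i j| ≤ ∑ _i : Fin p, (c * n + p * (c * (τ * Real.sqrt n))) :=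
          Finset.sum_le_sum (fun i _ => key i)
      _ = p * (c * n + p * (c * (τ * Real.sqrt n))) := by rw [Finset.sum_const]; simp [nsmul_eq_mul]; ring
      _ = γ * k * n / p + γ * k * (τ * Real.sqrt n) := by
          rw [hcdef]; field_simp
      _ ≤ (k:ℝ) ^ 2 / 2 := by
          have e1 : γ * k * n / p ≤ k := by
            rw [div_le_iff₀ hp']
            nlinarith
          have e2 : γ * k * (τ * Real.sqrt n) ≤ k * k / 4 := by
            nlinarith [Real.sqrt_nonneg (n:ℝ)]
          nlinarith
  · -- (b)
    have hform : ∀ i j : Fin p, tM n p X γ k i j * (1 / (n : ℝ) * dotR (X i) (X j))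
        = c / n * (dotR (X i) (X j))^2 := by
      intro i j; rw [tM, hcdef]; ring
    have : (∑ i, ∑ j, tM n p X γ k i j * (1 / (n : ℝ) * dotR (X i) (X j)))
        = c / n * ∑ i, ∑ j, (dotR (X i) (X j))^2 := by
      rw [Finset.mul_sum]
      exact Finset.sum_congr rfl fun i _ => by rw [Finset.mul_sum]; exact Finset.sum_congr rfl fun j _ => hform i j
    rw [this]
    calc (1 - ε) * γ * k = c / n * ((1 - ε) * n * (p:ℝ)^2) := by
          rw [hcdef]; field_simp
      _ ≤ c / n * ∑ i, ∑ j, (dotR (X i) (X j))^2 :=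
          mul_le_mul_of_nonneg_left h7 (by positivity)
  · -- (c)
    intro i
    constructor
    · rw [tM, h1 i]; ring
    · rw [div_le_div_iff₀ (by positivity) hp']
      nlinarith [mul_le_mul_of_nonneg_left hγn (by positivity : (0:ℝ) ≤ (k:ℝ)*p)]
  · -- (d)
    intro i j hij
    rw [tM, abs_mul, abs_of_nonneg hc]
    calc c * |dotR (X i) (X j)| ≤ c * (τ * Real.sqrt n) :=
          mul_le_mul_of_nonneg_left (h2 i j hij) hc
      _ = γ * k * τ * Real.sqrt n / (p : ℝ) ^ 2 := by rw [hcdef]; ring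

end
end

section
/- There exists an absolute constant C such that the following holds. Let p, n, k be positive integers, γ ≥ 1, τ ≥ 1 and ε ∈ (0,1), with p ≥ γn and k ≥ C·γ·τ·√n. Suppose X₁,…,X_p ∈ ℝ^n satisfy the pseudorandomness condition with parameter τ and slack ε. Then there exists an assignment M' of real values to monomials of degree at most 2 in x₁,…,x_p with M'(1) = 1 such that: the p×p matrix (M'(x_i x_j))_{i,j} is positive semidefinite; Σ_{i∈[p]} M'(x_i²) = k; Σ_{i,j∈[p]} |M'(x_i x_j)| ≤ k²; and the objective value Σ_{i,j∈[p]} M'(x_i x_j)·(1/n)⟨X_i,X_j⟩ is at least (1 − ε)·γk. -/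
open scoped BigOperators

noncomputable section

lemma pair_eq_pair_aux {α : Type*} {i j k l : α} (h : ({i, j} : Multiset α) = {k, l}) :
    (i = k ∧ j = l) ∨ (i = l ∧ j = k) := by
  rcases Multiset.cons_eq_cons.mp h with ⟨hik, hjl⟩ | ⟨hne, cs, h1, h2⟩
  · exact Or.inl ⟨hik, Multiset.singleton_inj.mp hjl⟩
  · have hcs : cs = 0 := by
      have := congrArg Multiset.card h1
      simpa using this.symm
    subst hcs
    refine Or.inr ⟨?_, ?_⟩
    · exact (Multiset.singleton_inj.mp h2).symm
    · exact Multiset.singleton_inj.mp h1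

lemma dotR_symm {n : ℕ} (x y : Fin n → ℝ) : dotR x y = dotR y x := by
  unfold dotR; exact Finset.sum_congr rfl fun a _ => mul_comm _ _

set_option maxHeartbeats 2000000 in
/-- Corollary `cor:M2`: existence of degree-2 pseudo-moments satisfying the
degree-2 constraints exactly, with a large objective value.  The assignment `M'` of values to
monomials of degree at most 2 is encoded as a function on multisets of variables of size ≤ 2. -/
theorem exists_degree2_pseudomoments :
    ∃ C : ℝ, 0 < C ∧
      ∀ (n p k : ℕ) (γ τ ε : ℝ),
        0 < n → 0 < p → 0 < k →
        1 ≤ γ → 1 ≤ τ → 0 < ε → ε < 1 →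
        γ * n ≤ (p : ℝ) → C * γ * τ * Real.sqrt n ≤ (k : ℝ) →
        ∀ X : Fin p → Fin n → ℝ, PseudoRandom n p X τ ε →
        ∃ M' : Multiset (Fin p) → ℝ,
          M' 0 = 1 ∧
          (Matrix.of fun i j => M' {i, j}).PosSemidef ∧
          (∑ i : Fin p, M' {i, i}) = (k : ℝ) ∧
          (∑ i : Fin p, ∑ j : Fin p, |M' {i, j}|) ≤ (k : ℝ) ^ 2 ∧
          (1 - ε) * γ * k ≤
            ∑ i : Fin p, ∑ j : Fin p, M' {i, j} * (1 / (n : ℝ) * dotR (X i) (X j)) := by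
  refine ⟨2, by norm_num, ?_⟩
  intro n p k γ τ ε hn hp hk hγ hτ hε0 hε1 hγn hkC X hX
  obtain ⟨P1, P2, _, _, _, _, P7⟩ := hX
  have hN : (0 : ℝ) < n := by exact_mod_cast hn
  have hP : (0 : ℝ) < p := by exact_mod_cast hp
  have hK : (0 : ℝ) < k := by exact_mod_cast hk
  have hsN : (0 : ℝ) < Real.sqrt n := Real.sqrt_pos.mpr hN
  have hn' : ((n : ℝ)) ≠ 0 := ne_of_gt hN
  have hp' : ((p : ℝ)) ≠ 0 := ne_of_gt hP
  have hsn' : Real.sqrt n ≠ 0 := ne_of_gt hsN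
  have hsN1 : (1 : ℝ) ≤ Real.sqrt n := by
    rw [show (1:ℝ) = Real.sqrt 1 by simp]
    exact Real.sqrt_le_sqrt (by exact_mod_cast hn)
  -- parameters
  set b : ℝ := γ * n * k / (p : ℝ) ^ 2 with hb_def
  set a : ℝ := k / p - b with ha_def
  have hb0 : 0 ≤ b := by positivity
  have ha0 : 0 ≤ a := by
    rw [ha_def, hb_def, sub_nonneg, div_le_div_iff₀ (by positivity) hP]
    have : γ * n * k * p = (γ * n) * (k * p) := by ring
    nlinarith [mul_le_mul_of_nonneg_right hγn (by positivity : (0:ℝ) ≤ k * p)]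
  have hab : a + b = k / p := by rw [ha_def]; ring
  -- the matrix entries
  set A : Fin p → Fin p → ℝ :=
    fun i j => (if i = j then a else 0) + b / n * dotR (X i) (X j) with hA_def
  have hAsymm : ∀ i j, A i j = A j i := by
    intro i j
    simp only [hA_def, dotR_symm (X i) (X j)]
    by_cases h : i = j <;> simp [h, eq_comm]
  -- the pseudo-moment assignment
  classical
  set M' : Multiset (Fin p) → ℝ :=
    fun m => if h : ∃ ij : Fin p × Fin p, m = {ij.1, ij.2}
      then A h.choose.1 h.choose.2 else 1 with hM_def
  have hM0 : M' 0 = 1 := by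
    rw [hM_def]
    simp only []
    rw [dif_neg]
    rintro ⟨ij, hij⟩
    have := congrArg Multiset.card hij
    simp at this
  have hMpair : ∀ i j, M' {i, j} = A i j := by
    intro i j
    have hex : ∃ ij : Fin p × Fin p, ({i, j} : Multiset (Fin p)) = {ij.1, ij.2} :=
      ⟨(i, j), rfl⟩
    rw [hM_def]
    simp only []
    rw [dif_pos hex]
    rcases pair_eq_pair_aux hex.choose_spec with ⟨h1, h2⟩ | ⟨h1, h2⟩
    · rw [← h1, ← h2]
    · rw [← h1, ← h2, hAsymm]
  refine ⟨M', hM0, ?_, ?_, ?_, ?_⟩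
  · -- PSD
    set B : Matrix (Fin p) (Fin n) ℝ := Real.sqrt (b / n) • Matrix.of X with hB_def
    have hentry : (Matrix.of fun i j => M' {i, j}) =
        Matrix.diagonal (fun _ => a) + B * B.conjTranspose := by
      ext i j
      simp only [hB_def, Matrix.of_apply, Matrix.add_apply, Matrix.diagonal_apply,
        Matrix.mul_apply, Matrix.conjTranspose_apply, Matrix.smul_apply, smul_eq_mul,
        star_trivial, hMpair]
      rw [hA_def]
      have hss : Real.sqrt (b / (n : ℝ)) * Real.sqrt (b / (n : ℝ)) = b / (n : ℝ) :=
        Real.mul_self_sqrt (by positivity)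
      simp only []
      congr 1
      rw [dotR, Finset.mul_sum]
      refine Finset.sum_congr rfl fun l _ => ?_
      linear_combination (-(X i l * X j l)) * hss
    rw [hentry]
    exact (Matrix.PosSemidef.diagonal (fun _ => ha0)).add
      (Matrix.posSemidef_self_mul_conjTranspose _)
  · -- trace
    have : ∀ i, M' {i, i} = a + b := by
      intro i
      rw [hMpair, hA_def]
      simp only [if_pos rfl, P1 i]
      field_simp
      simp
    rw [Finset.sum_congr rfl fun i _ => this i]
    simp only [Finset.sum_const, Finset.card_univ, Fintype.card_fin, nsmul_eq_mul]
    rw [hab]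
    field_simp
  · -- absolute sum
    have hbound : ∀ i j : Fin p, |M' {i, j}| ≤
        (if i = j then a + b else 0) + b * τ / Real.sqrt n := by
      intro i j
      rw [hMpair, hA_def]
      by_cases h : i = j
      · subst h
        simp only [eq_self_iff_true, if_true, P1]
        have hbb : b / (n : ℝ) * (n : ℝ) = b := by field_simp
        rw [hbb, abs_of_nonneg (add_nonneg ha0 hb0)]
        have h9 : 0 ≤ b * τ / Real.sqrt n := by positivity
        linarith
      · simp only [if_neg h, zero_add]
        rw [abs_mul, abs_of_nonneg (by positivity : (0:ℝ) ≤ b / n)]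
        have h2 := P2 i j h
        have hle : b / n * |dotR (X i) (X j)| ≤ b / n * (τ * Real.sqrt n) :=
          mul_le_mul_of_nonneg_left h2 (by positivity)
        refine hle.trans (le_of_eq ?_)
        have hss : Real.sqrt n * Real.sqrt n = (n : ℝ) := Real.mul_self_sqrt hN.le
        field_simp
        linear_combination b * hss
    have hrow : ∀ i : Fin p, (∑ j : Fin p,
        ((if i = j then a + b else 0) + b * τ / Real.sqrt n)) =
        (a + b) + p * (b * τ / Real.sqrt n) := by
      intro i
      rw [Finset.sum_add_distrib, Finset.sum_ite_eq, if_pos (Finset.mem_univ i)]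
      simp [Finset.card_univ]
    have hsum : (∑ i : Fin p, ∑ j : Fin p, |M' {i, j}|) ≤
        p * ((a + b) + p * (b * τ / Real.sqrt n)) := by
      calc (∑ i : Fin p, ∑ j : Fin p, |M' {i, j}|)
          ≤ ∑ i : Fin p, ∑ j : Fin p,
              ((if i = j then a + b else 0) + b * τ / Real.sqrt n) :=
            Finset.sum_le_sum fun i _ => Finset.sum_le_sum fun j _ => hbound i j
        _ = ∑ i : Fin p, ((a + b) + p * (b * τ / Real.sqrt n)) :=
            Finset.sum_congr rfl fun i _ => hrow i
        _ = p * ((a + b) + p * (b * τ / Real.sqrt n)) := by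
            rw [Finset.sum_const, Finset.card_univ, Fintype.card_fin, nsmul_eq_mul]
    have hval : (p : ℝ) * ((a + b) + p * (b * τ / Real.sqrt n)) =
        k + γ * τ * k * Real.sqrt n := by
      have hpb : (p : ℝ) ^ 2 * b = γ * n * k := by rw [hb_def]; field_simp
      have step1 : (p : ℝ) * ((a + b) + p * (b * τ / Real.sqrt n)) =
          k + ((p : ℝ) ^ 2 * b) * τ / Real.sqrt n := by
        rw [hab]; field_simp
      rw [step1, hpb]
      have hss : Real.sqrt n * Real.sqrt n = (n : ℝ) := Real.mul_self_sqrt hN.le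
      congr 1
      rw [div_eq_iff hsn']
      linear_combination (-(γ * (k : ℝ) * τ)) * hss
    have hfinal : (k : ℝ) + γ * τ * k * Real.sqrt n ≤ (k : ℝ) ^ 2 := by
      have hγτ : (1 : ℝ) ≤ γ * τ := by
        nlinarith [mul_le_mul hγ hτ zero_le_one (zero_le_one.trans hγ)]
      have h1 : (1 : ℝ) ≤ γ * τ * Real.sqrt n := by
        nlinarith [mul_le_mul hγτ hsN1 zero_le_one (zero_le_one.trans hγτ)]
      have h2 := mul_le_mul_of_nonneg_left hkC hK.le
      have h3 := mul_le_mul_of_nonneg_left h1 hK.le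
      nlinarith [h2, h3]
    rw [hval] at hsum
    exact hsum.trans hfinal
  · -- objective
    have hrow : ∀ i : Fin p, (∑ j : Fin p, M' {i, j} * (1 / (n : ℝ) * dotR (X i) (X j))) =
        a + b / (n : ℝ) ^ 2 * ∑ j : Fin p, (dotR (X i) (X j)) ^ 2 := by
      intro i
      have hterm : ∀ j : Fin p, M' {i, j} * (1 / (n : ℝ) * dotR (X i) (X j)) =
          (if i = j then a * (1 / (n : ℝ) * dotR (X i) (X j)) else 0) +
            b / (n : ℝ) ^ 2 * (dotR (X i) (X j)) ^ 2 := by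
        intro j
        rw [hMpair, hA_def]
        by_cases h : i = j
        · simp only [if_pos h]
          ring
        · simp only [if_neg h, zero_add]
          ring
      rw [Finset.sum_congr rfl fun j _ => hterm j, Finset.sum_add_distrib,
        Finset.sum_ite_eq, if_pos (Finset.mem_univ i), P1 i, ← Finset.mul_sum]
      congr 1
      field_simp
    have htot : (∑ i : Fin p, ∑ j : Fin p, M' {i, j} * (1 / (n : ℝ) * dotR (X i) (X j))) =
        p * a + b / (n : ℝ) ^ 2 * ∑ i : Fin p, ∑ j : Fin p, (dotR (X i) (X j)) ^ 2 := by
      rw [Finset.sum_congr rfl fun i _ => hrow i, Finset.sum_add_distrib, ← Finset.mul_sum]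
      congr 1
      rw [Finset.sum_const, Finset.card_univ, Fintype.card_fin, nsmul_eq_mul]
    rw [htot]
    have h1 : b / (n : ℝ) ^ 2 * ((1 - ε) * n * (p : ℝ) ^ 2) ≤
        b / (n : ℝ) ^ 2 * ∑ i : Fin p, ∑ j : Fin p, (dotR (X i) (X j)) ^ 2 :=
      mul_le_mul_of_nonneg_left P7 (by positivity)
    have h2 : b / (n : ℝ) ^ 2 * ((1 - ε) * n * (p : ℝ) ^ 2) = (1 - ε) * γ * k := by
      rw [hb_def]
      field_simp
    calc (1 - ε) * γ * k = b / (n : ℝ) ^ 2 * ((1 - ε) * n * (p : ℝ) ^ 2) := h2.symm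
      _ ≤ b / (n : ℝ) ^ 2 * ∑ i : Fin p, ∑ j : Fin p, (dotR (X i) (X j)) ^ 2 := h1
      _ ≤ p * a + b / (n : ℝ) ^ 2 * ∑ i : Fin p, ∑ j : Fin p, (dotR (X i) (X j)) ^ 2 :=
          le_add_of_nonneg_left (mul_nonneg hP.le ha0)
end
end

section
/- There exist absolute constants C and s such that the following holds. Let τ ≥ 1, let k, n, p be positive integers and γ a real with 1 ≤ γ ≤ n, p = ⌈1.1·γn⌉, and k ≥ C·γ·√n·τ^s. Suppose X₁,…,X_p ∈ ℝ^n satisfy the pseudorandomness condition with parameter τ and some slack ε ∈ (0,1). Then the degree-4 array Q satisfies: (a) the p²×p² matrix with entries Q(x_i x_j x_s x_t) in position ((i,j),(s,t)) is positive semidefinite; (b) Q(x_i³ x_j) = (3k/p)·M̃(x_i x_j) for all i,j ∈ [p]; (c) the p×p matrix G defined by G_{st} = Σ_{i∈[p]} Q(x_i² x_s x_t) − k·M̃(x_s x_t) is positive semidefinite and satisfies |G_{ss}| ≤ C·τ²·γk²/p² for all s and |G_{st}| ≤ C·τ·γk²/(p²√n) for all s ≠ t; (d) Σ_{i,j,s,t∈[p]}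 |Q(x_i x_j x_s x_t)| ≤ k⁴/3. -/
open scoped BigOperators

noncomputable section

/-- The degree-4 array `Q(x_i x_j x_s x_t)`. -/
def Qarr (n p : ℕ) (X : Fin p → Fin n → ℝ) (γ k : ℝ) (i j s t : Fin p) : ℝ :=
  γ * k ^ 2 / ((p : ℝ) ^ 3 * n) *
    (dotR (X i) (X j) * dotR (X s) (X t) + dotR (X i) (X s) * dotR (X j) (X t) +
      dotR (X i) (X t) * dotR (X j) (X s))

lemma key_expand {n : ℕ} (u v w z : Fin n → ℝ) :
    ∑ a : Fin n, ∑ b : Fin n,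
      (u a * v b + u b * v a) * (w a * z b + w b * z a)
      = 2 * (dotR u w * dotR v z + dotR u z * dotR v w) := by
  have e : ∀ f g : Fin n → ℝ,
      (∑ a, ∑ b, f a * g b) = (∑ a, f a) * (∑ b, g b) := by
    intro f g; rw [Finset.sum_mul_sum]
  calc ∑ a : Fin n, ∑ b : Fin n, (u a * v b + u b * v a) * (w a * z b + w b * z a)
      = ∑ a : Fin n, ∑ b : Fin n,
          ((u a * w a) * (v b * z b) + (u a * z a) * (v b * w b)
            + ((v a * w a) * (u b * z b) + (v a * z a) * (u b * w b))) := by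
        refine Finset.sum_congr rfl fun a _ => Finset.sum_congr rfl fun b _ => by ring
    _ = (∑ a, u a * w a) * (∑ b, v b * z b) + (∑ a, u a * z a) * (∑ b, v b * w b)
        + ((∑ a, v a * w a) * (∑ b, u b * z b) + (∑ a, v a * z a) * (∑ b, u b * w b)) := by
        simp only [Finset.sum_add_distrib]
        rw [e, e, e, e]
    _ = 2 * (dotR u w * dotR v z + dotR u z * dotR v w) := by
        simp only [dotR]; ring

lemma sum4 {p : ℕ} (h : Fin p → Fin p → ℝ) :
    ∑ i, ∑ j, ∑ s, ∑ t, (h i j * h s t + h i s * h j t + h i t * h j s)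
      = 3 * (∑ i, ∑ j, h i j) ^ 2 := by
  simp only [Finset.sum_add_distrib, ← Finset.mul_sum, ← Finset.sum_mul]
  ring

set_option maxHeartbeats 1000000 in
/-- Lemma `lem:Q`: properties of the degree-4 moments `Q`. -/
theorem Qarr_properties :
    ∃ C s : ℝ, 0 < C ∧ 0 < s ∧
      ∀ (n p k : ℕ) (γ τ ε : ℝ),
        0 < n → 0 < k →
        1 ≤ τ → 1 ≤ γ → γ ≤ (n : ℝ) →
        p = ⌈(1.1 : ℝ) * γ * n⌉₊ →
        C * γ * Real.sqrt n * τ ^ s ≤ (k : ℝ) →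
        0 < ε → ε < 1 →
        ∀ X : Fin p → Fin n → ℝ, PseudoRandom n p X τ ε →
        -- (a) PSDness of the p² × p² matrix form of Q
        (Matrix.of fun (ij st : Fin p × Fin p) =>
            Qarr n p X γ k ij.1 ij.2 st.1 st.2).PosSemidef ∧
        -- (b) Q(x_i³ x_j) = (3k/p) M̃(x_i x_j)
        (∀ i j, Qarr n p X γ k i i i j = 3 * k / p * tM n p X γ k i j) ∧
        -- (c) G_{st} = Σ_i Q(x_i² x_s x_t) - k M̃(x_s x_t) is PSD and small
        ((Matrix.of fun s t =>
            (∑ i, Qarr n p X γ k i i s t) - k * tM n p X γ k s t).PosSemidef ∧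
          (∀ s, |(∑ i, Qarr n p X γ k i i s s) - k * tM n p X γ k s s| ≤
            C * τ ^ 2 * γ * k ^ 2 / (p : ℝ) ^ 2) ∧
          (∀ s t, s ≠ t →
            |(∑ i, Qarr n p X γ k i i s t) - k * tM n p X γ k s t| ≤
              C * τ * γ * k ^ 2 / ((p : ℝ) ^ 2 * Real.sqrt n))) ∧
        -- (d) ℓ¹ sparsity bound
        (∑ i, ∑ j, ∑ s, ∑ t, |Qarr n p X γ k i j s t|) ≤ (k : ℝ) ^ 4 / 3 := by
  refine ⟨100, 1, by norm_num, by norm_num, ?_⟩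
  intro n p k γ τ ε hn hk hτ hγ hγn hp hkC hε0 hε1 X hX
  obtain ⟨P1, P2, -, -, P5, -, -⟩ := hX
  have hn' : (0:ℝ) < n := by exact_mod_cast hn
  have hn1 : (1:ℝ) ≤ n := by exact_mod_cast hn
  have hk' : (0:ℝ) < k := by exact_mod_cast hk
  have hγ0 : (0:ℝ) < γ := lt_of_lt_of_le one_pos hγ
  have hτ0 : (0:ℝ) < τ := lt_of_lt_of_le one_pos hτ
  have hsq : Real.sqrt n * Real.sqrt n = (n:ℝ) := Real.mul_self_sqrt (le_of_lt hn')
  have hs1 : (1:ℝ) ≤ Real.sqrt n := by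
    rw [show (1:ℝ) = Real.sqrt 1 from (Real.sqrt_one).symm]
    exact Real.sqrt_le_sqrt hn1
  have hspos : (0:ℝ) < Real.sqrt n := lt_of_lt_of_le one_pos hs1
  have hγn1 : (1:ℝ) ≤ γ * n := by nlinarith
  have hpge : (1.1:ℝ) * γ * n ≤ p := by rw [hp]; exact Nat.le_ceil _
  have hple : (p:ℝ) ≤ 1.1 * γ * n + 1 := by
    rw [hp]; exact le_of_lt (Nat.ceil_lt_add_one (by positivity))
  have hple' : (p:ℝ) ≤ 2.1 * (γ * (n:ℝ)) := by nlinarith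
  have hpn : (n:ℝ) ≤ p := by nlinarith
  have hp0 : (0:ℝ) < p := lt_of_lt_of_le hn' hpn
  have hp0' : (p:ℝ) ≠ 0 := ne_of_gt hp0
  have hn0 : (n:ℝ) ≠ 0 := ne_of_gt hn'
  rw [Real.rpow_one] at hkC
  have hk2 : 10000 * (γ^2 * (n:ℝ) * τ^2) ≤ (k:ℝ)^2 := by
    nlinarith [mul_self_le_mul_self (show (0:ℝ) ≤ 100*γ*Real.sqrt n*τ by positivity) hkC, hsq]
  obtain ⟨c, hc_def⟩ : ∃ c : ℝ, c = γ * (k:ℝ) ^ 2 / ((p : ℝ) ^ 3 * (n:ℝ)) := ⟨_, rfl⟩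
  have hc : 0 ≤ c := by rw [hc_def]; positivity
  have hc2 : (0:ℝ) ≤ c / 2 := by linarith
  have hQ : ∀ i j s t : Fin p, Qarr n p X γ (k:ℝ) i j s t
      = c * (dotR (X i) (X j) * dotR (X s) (X t) + dotR (X i) (X s) * dotR (X j) (X t)
          + dotR (X i) (X t) * dotR (X j) (X s)) := by
    intro i j s t; simp only [Qarr]; rw [hc_def]
  refine ⟨?_, ?_, ⟨?_, ?_, ?_⟩, ?_⟩
  · -- (a)
    obtain ⟨A, hA⟩ : ∃ A : Matrix (Fin p × Fin p) (Unit ⊕ Fin n × Fin n) ℝ,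
        A = Matrix.of fun ij u => Sum.elim
          (fun _ : Unit => Real.sqrt c * dotR (X ij.1) (X ij.2))
          (fun ab : Fin n × Fin n => Real.sqrt (c/2) *
            (X ij.1 ab.1 * X ij.2 ab.2 + X ij.1 ab.2 * X ij.2 ab.1)) u := ⟨_, rfl⟩
    have hM : (Matrix.of fun (ij st : Fin p × Fin p) =>
        Qarr n p X γ k ij.1 ij.2 st.1 st.2) = A * A.conjTranspose := by
      ext ⟨i, j⟩ ⟨s, t⟩
      simp only [Matrix.mul_apply, Matrix.conjTranspose_apply, Matrix.of_apply, hA,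
        star_trivial]
      rw [Fintype.sum_sum_type]
      have h2 : ∑ ab : Fin n × Fin n,
          (Sum.elim (fun _ : Unit => Real.sqrt c * dotR (X i) (X j))
            (fun ab : Fin n × Fin n => Real.sqrt (c/2) *
              (X i ab.1 * X j ab.2 + X i ab.2 * X j ab.1)) (Sum.inr ab)) *
          (Sum.elim (fun _ : Unit => Real.sqrt c * dotR (X s) (X t))
            (fun ab : Fin n × Fin n => Real.sqrt (c/2) *
              (X s ab.1 * X t ab.2 + X s ab.2 * X t ab.1)) (Sum.inr ab))
          = (c/2) * (2 * (dotR (X i) (X s) * dotR (X j) (X t)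
              + dotR (X i) (X t) * dotR (X j) (X s))) := by
        simp only [Sum.elim_inr]
        rw [← key_expand (X i) (X j) (X s) (X t), Fintype.sum_prod_type, Finset.mul_sum]
        refine Finset.sum_congr rfl fun a _ => ?_
        rw [Finset.mul_sum]
        refine Finset.sum_congr rfl fun b _ => ?_
        rw [mul_mul_mul_comm, Real.mul_self_sqrt hc2]
      rw [h2]
      simp only [Sum.elim_inl, Finset.univ_unique, Finset.sum_singleton]
      rw [mul_mul_mul_comm, Real.mul_self_sqrt hc, hQ i j s t]
      ring
    rw [hM]
    exact Matrix.posSemidef_self_mul_conjTranspose A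
  · -- (b)
    intro i j
    simp only [Qarr, tM]
    rw [P1 i]
    field_simp
    ring
  all_goals
    have hG : ∀ s t : Fin p, (∑ i, Qarr n p X γ k i i s t) - k * tM n p X γ k s t
        = 2 * c * ∑ i, dotR (X i) (X s) * dotR (X i) (X t) := by
      intro s t
      have h1 : ∀ i : Fin p, Qarr n p X γ (k:ℝ) i i s t
          = c * ((n:ℝ) * dotR (X s) (X t))
            + 2 * c * (dotR (X i) (X s) * dotR (X i) (X t)) := by
        intro i
        rw [hQ i i s t, P1 i]
        ring
      rw [Finset.sum_congr rfl fun i _ => h1 i, Finset.sum_add_distrib, Finset.sum_const,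
        ← Finset.mul_sum, Finset.card_univ, Fintype.card_fin, nsmul_eq_mul]
      have h2 : (p:ℝ) * (c * ((n:ℝ) * dotR (X s) (X t))) = k * tM n p X γ k s t := by
        simp only [tM]; rw [hc_def]; field_simp
      rw [h2]; ring
    skip
  · -- (c) PSD
    obtain ⟨B, hB⟩ : ∃ B : Matrix (Fin p) (Fin p) ℝ,
        B = Matrix.of fun i s => Real.sqrt (2*c) * dotR (X i) (X s) := ⟨_, rfl⟩
    have hGB : (Matrix.of fun s t =>
        (∑ i, Qarr n p X γ k i i s t) - k * tM n p X γ k s t) = B.conjTranspose * B := by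
      ext s t
      simp only [Matrix.mul_apply, Matrix.conjTranspose_apply, Matrix.of_apply, hB,
        star_trivial]
      rw [hG s t, Finset.mul_sum]
      refine Finset.sum_congr rfl fun i _ => ?_
      rw [mul_mul_mul_comm (Real.sqrt (2*c)) (dotR (X i) (X s)) (Real.sqrt (2*c))
        (dotR (X i) (X t)), Real.mul_self_sqrt (by positivity)]
    rw [hGB]
    exact Matrix.posSemidef_conjTranspose_mul_self B
  · -- (c) diagonal bound
    intro s
    rw [hG s s]
    have hnn : (0:ℝ) ≤ ∑ i, dotR (X i) (X s) * dotR (X i) (X s) :=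
      Finset.sum_nonneg fun i _ => mul_self_nonneg _
    rw [abs_of_nonneg (by positivity)]
    have hsum : ∑ i, dotR (X i) (X s) * dotR (X i) (X s)
        ≤ (n:ℝ)*(n:ℝ) + (p:ℝ)*(τ^2*(n:ℝ)) := by
      rw [Finset.sum_eq_sum_sdiff_singleton_add (Finset.mem_univ s)
        fun i => dotR (X i) (X s) * dotR (X i) (X s)]
      have h1 : ∑ i ∈ Finset.univ \ {s}, dotR (X i) (X s) * dotR (X i) (X s)
          ≤ ((Finset.univ \ {s} : Finset (Fin p)).card) • (τ^2*(n:ℝ)) := by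
        refine Finset.sum_le_card_nsmul _ _ _ fun i hi => ?_
        have his : i ≠ s := by
          have := (Finset.mem_sdiff.mp hi).2
          simpa using this
        have habs := P2 i s his
        nlinarith [abs_nonneg (dotR (X i) (X s)), sq_abs (dotR (X i) (X s)), hsq,
          Real.sqrt_nonneg (n:ℝ), hτ0]
      rw [nsmul_eq_mul] at h1
      have hcard : (((Finset.univ \ {s} : Finset (Fin p)).card) : ℝ) ≤ (p:ℝ) := by
        have h := Finset.card_le_univ (Finset.univ \ {s} : Finset (Fin p))
        have h' : Fintype.card (Fin p) = p := Fintype.card_fin p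
        exact_mod_cast le_trans h (le_of_eq h')
      have h3 : (((Finset.univ \ {s}:Finset (Fin p)).card : ℝ)) * (τ^2*(n:ℝ))
          ≤ (p:ℝ) * (τ^2*(n:ℝ)) := mul_le_mul_of_nonneg_right hcard (by positivity)
      have hss : dotR (X s) (X s) * dotR (X s) (X s) = (n:ℝ)*(n:ℝ) := by rw [P1 s]
      linarith
    have hstep : 2*c*(∑ i, dotR (X i) (X s) * dotR (X i) (X s))
        ≤ 2*c*((n:ℝ)*(n:ℝ) + (p:ℝ)*(τ^2*(n:ℝ))) :=
      mul_le_mul_of_nonneg_left hsum (by positivity)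
    refine le_trans hstep ?_
    rw [hc_def]
    have hLHS : 2 * (γ*(k:ℝ)^2/((p:ℝ)^3*(n:ℝ))) * ((n:ℝ)*(n:ℝ) + (p:ℝ)*(τ^2*(n:ℝ)))
        = (2*γ*(k:ℝ)^2*((n:ℝ)*(n:ℝ) + (p:ℝ)*(τ^2*(n:ℝ)))) / ((p:ℝ)^3*(n:ℝ)) := by
      ring
    rw [hLHS, div_le_div_iff₀ (by positivity) (by positivity)]
    nlinarith [hpn, hτ, mul_pos (mul_pos hγ0 (mul_pos hk' hk')) (mul_pos hp0 hp0),
      mul_le_mul_of_nonneg_left hpn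
        (show (0:ℝ) ≤ 2*γ*(k:ℝ)^2*(p:ℝ)^2*(n:ℝ) by positivity),
      mul_le_mul_of_nonneg_left (show (1:ℝ) ≤ τ^2 by nlinarith)
        (show (0:ℝ) ≤ 2*γ*(k:ℝ)^2*(p:ℝ)^3*(n:ℝ) by positivity)]
  · -- (c) off-diagonal bound
    intro s t hst
    rw [hG s t, abs_mul, abs_of_nonneg (show (0:ℝ) ≤ 2*c by positivity)]
    have h5 := P5 s t hst
    calc 2*c*|∑ i, dotR (X i) (X s) * dotR (X i) (X t)|
        ≤ 2*c*(τ*Real.sqrt n*(p:ℝ)) := mul_le_mul_of_nonneg_left h5 (by positivity)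
      _ ≤ 100*τ*γ*(k:ℝ)^2/((p:ℝ)^2*Real.sqrt n) := by
          rw [hc_def]
          have hEq : 2*(γ*(k:ℝ)^2/((p:ℝ)^3*(n:ℝ)))*(τ*Real.sqrt n*(p:ℝ))
              = (2*γ*(k:ℝ)^2*τ*Real.sqrt n*(p:ℝ))/((p:ℝ)^3*(n:ℝ)) := by ring
          rw [hEq, div_le_div_iff₀ (by positivity) (by positivity)]
          nlinarith [hsq, mul_pos (mul_pos hγ0 (mul_pos hk' hk')) (mul_pos hτ0
            (mul_pos (mul_pos hp0 (mul_pos hp0 hp0)) hn'))]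
  · -- (d)
    have habsQ : ∀ i j s t : Fin p, |Qarr n p X γ k i j s t|
        ≤ c * (|dotR (X i) (X j)| * |dotR (X s) (X t)|
            + |dotR (X i) (X s)| * |dotR (X j) (X t)|
            + |dotR (X i) (X t)| * |dotR (X j) (X s)|) := by
      intro i j s t
      rw [hQ i j s t, abs_mul, abs_of_nonneg hc]
      refine mul_le_mul_of_nonneg_left ?_ hc
      refine le_trans (abs_add_three _ _ _) ?_
      simp [abs_mul]
    obtain ⟨T, hT_def⟩ : ∃ T : ℝ, T = ∑ i, ∑ j, |dotR (X i) (X j)| := ⟨_, rfl⟩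
    have hT0 : (0:ℝ) ≤ T := by
      rw [hT_def]
      exact Finset.sum_nonneg fun i _ => Finset.sum_nonneg fun j _ => abs_nonneg _
    have hT : T ≤ (p:ℝ)*(n:ℝ) + (p:ℝ)^2*(τ*Real.sqrt n) := by
      rw [hT_def]
      calc ∑ i, ∑ j, |dotR (X i) (X j)|
          ≤ ∑ _i : Fin p, ((n:ℝ) + (p:ℝ)*(τ*Real.sqrt n)) := by
            refine Finset.sum_le_sum fun i _ => ?_
            rw [Finset.sum_eq_sum_sdiff_singleton_add (Finset.mem_univ i)
              fun j => |dotR (X i) (X j)|]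
            have h1 : ∑ j ∈ Finset.univ \ {i}, |dotR (X i) (X j)|
                ≤ ((Finset.univ \ {i} : Finset (Fin p)).card) • (τ*Real.sqrt n) := by
              refine Finset.sum_le_card_nsmul _ _ _ fun j hj => ?_
              have hji : j ≠ i := by
                have := (Finset.mem_sdiff.mp hj).2
                simpa using this
              exact P2 i j hji.symm
            rw [nsmul_eq_mul] at h1
            have hcard : (((Finset.univ \ {i} : Finset (Fin p)).card) : ℝ) ≤ (p:ℝ) := by
              have h := Finset.card_le_univ (Finset.univ \ {i} : Finset (Fin p))
              have h' : Fintype.card (Fin p) = p := Fintype.card_fin p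
              exact_mod_cast le_trans h (le_of_eq h')
            have h3 : (((Finset.univ \ {i}:Finset (Fin p)).card : ℝ)) * (τ*Real.sqrt n)
                ≤ (p:ℝ) * (τ*Real.sqrt n) := mul_le_mul_of_nonneg_right hcard (by positivity)
            have h2 : |dotR (X i) (X i)| = (n:ℝ) := by
              rw [P1 i]; exact abs_of_nonneg (Nat.cast_nonneg n)
            linarith
        _ = (p:ℝ) * ((n:ℝ) + (p:ℝ)*(τ*Real.sqrt n)) := by
            rw [Finset.sum_const, Finset.card_univ, Fintype.card_fin, nsmul_eq_mul]
        _ = (p:ℝ)*(n:ℝ) + (p:ℝ)^2*(τ*Real.sqrt n) := by ring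
    have hSle : (∑ i, ∑ j, ∑ s, ∑ t, |Qarr n p X γ k i j s t|) ≤ c * (3 * T^2) := by
      calc ∑ i, ∑ j, ∑ s, ∑ t, |Qarr n p X γ k i j s t|
          ≤ ∑ i, ∑ j, ∑ s, ∑ t, c * (|dotR (X i) (X j)| * |dotR (X s) (X t)|
              + |dotR (X i) (X s)| * |dotR (X j) (X t)|
              + |dotR (X i) (X t)| * |dotR (X j) (X s)|) := by
            refine Finset.sum_le_sum fun i _ => Finset.sum_le_sum fun j _ =>
              Finset.sum_le_sum fun s _ => Finset.sum_le_sum fun t _ => habsQ i j s t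
        _ = c * ∑ i, ∑ j, ∑ s, ∑ t, (|dotR (X i) (X j)| * |dotR (X s) (X t)|
              + |dotR (X i) (X s)| * |dotR (X j) (X t)|
              + |dotR (X i) (X t)| * |dotR (X j) (X s)|) := by
            simp only [← Finset.mul_sum]
        _ = c * (3 * T^2) := by
            rw [sum4 fun i j => |dotR (X i) (X j)|, hT_def]
    have hTT : T^2 ≤ 4*(p:ℝ)^4*τ^2*(n:ℝ) := by
      have hsnn : Real.sqrt n ≤ (n:ℝ) := by nlinarith [hsq, hs1, hspos]
      have hsnp : Real.sqrt n ≤ (p:ℝ) := le_trans hsnn hpn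
      have e1 : (n:ℝ) ≤ (p:ℝ)*Real.sqrt n := by
        nlinarith [hsq, mul_le_mul_of_nonneg_right hsnp (Real.sqrt_nonneg (n:ℝ))]
      have h1 : T ≤ 2*((p:ℝ)^2*(τ*Real.sqrt n)) := by
        have h2 : (p:ℝ)*(n:ℝ) ≤ (p:ℝ)^2*(τ*Real.sqrt n) := by
          nlinarith [mul_le_mul_of_nonneg_left e1 hp0.le, hτ, hp0, hspos,
            mul_nonneg (mul_nonneg hp0.le hp0.le) (Real.sqrt_nonneg (n:ℝ)),
            mul_le_mul_of_nonneg_left hτ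
              (mul_nonneg (mul_nonneg hp0.le hp0.le) (Real.sqrt_nonneg (n:ℝ)))]
        linarith
      nlinarith [mul_self_le_mul_self hT0 h1, hsq, hT0]
    have h2 : c*(12*(p:ℝ)^4*τ^2*(n:ℝ)) = 12*γ*(k:ℝ)^2*τ^2*(p:ℝ) := by
      rw [hc_def]; field_simp
    have h1' : c*(3*T^2) ≤ 12*γ*(k:ℝ)^2*τ^2*(p:ℝ) := by
      refine le_trans (mul_le_mul_of_nonneg_left (show 3*T^2 ≤ 12*(p:ℝ)^4*τ^2*(n:ℝ) by
        linarith) hc) (le_of_eq h2)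
    have h3 : 12*γ*(k:ℝ)^2*τ^2*(p:ℝ) ≤ (k:ℝ)^4/3 := by
      rw [le_div_iff₀ (by norm_num : (0:ℝ) < 3)]
      have h4 : 36*γ*τ^2*(p:ℝ) ≤ (k:ℝ)^2 := by
        linarith [hk2, mul_le_mul_of_nonneg_left hple'
          (show (0:ℝ) ≤ 36*γ*τ^2 by positivity),
          (show (0:ℝ) ≤ γ^2*(n:ℝ)*τ^2 by positivity)]
      linarith [mul_le_mul_of_nonneg_right h4 (sq_nonneg ((k:ℝ)))]
    exact le_trans hSle (le_trans h1' h3)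

end
end

section
/- Let m and n be positive integers, let A be an m×m real diagonal matrix, let D be an n×n real diagonal matrix, and let C be an n×m real matrix. Let Γ be the symmetric (m+n)×(m+n) block matrix Γ = [[A, Cᵀ], [C, D]]. Suppose there exists α > 0 such that A_{jj} ≥ (1/α)·Σ_{i∈[n]} |C_{ij}| for every j ∈ [m], and D_{ii} ≥ α·Σ_{j∈[m]} |C_{ij}| for every i ∈ [n]. Then Γ is positive semidefinite. -/
open Matrix
open scoped BigOperators

noncomputable section

/-- Lemma `lem:extended-gershgorin`, a consequence of the Gershgorin circle
theorem: a symmetric block matrix `[[A, Cᵀ], [C, D]]` with diagonal blocks `A, D` is positive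
semidefinite provided the diagonal entries dominate the weighted absolute row/column sums of the
off-diagonal block. -/
theorem gershgorin_block_psd (m n : ℕ) (hm : 0 < m) (hn : 0 < n)
    (A : Matrix (Fin m) (Fin m) ℝ) (D : Matrix (Fin n) (Fin n) ℝ)
    (C : Matrix (Fin n) (Fin m) ℝ)
    (hA : A.IsDiag) (hD : D.IsDiag)
    (α : ℝ) (hα : 0 < α)
    (h1 : ∀ j, (1 / α) * ∑ i, |C i j| ≤ A j j)
    (h2 : ∀ i, α * ∑ j, |C i j| ≤ D i i) :
    (Matrix.fromBlocks A Cᵀ C D).PosSemidef := by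
  rw [Matrix.posSemidef_iff_dotProduct_mulVec]
  constructor
  · show _ = _
    rw [Matrix.fromBlocks_conjTranspose]
    simp [Matrix.conjTranspose_eq_transpose_of_trivial, hA.isSymm.eq, hD.isSymm.eq]
  · intro x
    set u := x ∘ Sum.inl with hu
    set v := x ∘ Sum.inr with hv
    have hx : Sum.elim u v = x := Sum.elim_comp_inl_inr x
    rw [← hx, Matrix.fromBlocks_mulVec]
    have hstar : star (Sum.elim u v) = Sum.elim u v := by ext i; simp
    rw [hstar, sumElim_dotProduct_sumElim]
    simp only [Sum.elim_comp_inl, Sum.elim_comp_inr, dotProduct_add]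
    have hAu : u ⬝ᵥ A *ᵥ u = ∑ j, A j j * u j ^ 2 := by
      simp only [dotProduct, Matrix.mulVec, dotProduct]
      refine Finset.sum_congr rfl fun j _ => ?_
      rw [Finset.mul_sum, Finset.sum_eq_single j]
      · ring
      · intro k _ hk; rw [hA (fun h => hk h.symm)]; ring
      · intro h; exact absurd (Finset.mem_univ j) h
    have hDv : v ⬝ᵥ D *ᵥ v = ∑ i, D i i * v i ^ 2 := by
      simp only [dotProduct, Matrix.mulVec, dotProduct]
      refine Finset.sum_congr rfl fun i _ => ?_
      rw [Finset.mul_sum, Finset.sum_eq_single i]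
      · ring
      · intro k _ hk; rw [hD (fun h => hk h.symm)]; ring
      · intro h; exact absurd (Finset.mem_univ i) h
    have hC1 : u ⬝ᵥ Cᵀ *ᵥ v = ∑ i, ∑ j, C i j * v i * u j := by
      simp only [dotProduct, Matrix.mulVec, dotProduct,
        Matrix.transpose_apply, Finset.mul_sum]
      rw [Finset.sum_comm]
      exact Finset.sum_congr rfl fun i _ => Finset.sum_congr rfl fun j _ => by ring
    have hC2 : v ⬝ᵥ C *ᵥ u = ∑ i, ∑ j, C i j * v i * u j := by
      simp only [dotProduct, Matrix.mulVec, dotProduct, Finset.mul_sum]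
      exact Finset.sum_congr rfl fun i _ => Finset.sum_congr rfl fun j _ => by ring
    rw [hAu, hDv, hC1, hC2]
    have key : (0:ℝ) ≤ ∑ i, ∑ j, |C i j| * ((1/α) * u j ^ 2 + α * v i ^ 2 - 2 * |v i| * |u j|) := by
      refine Finset.sum_nonneg fun i _ => Finset.sum_nonneg fun j _ => ?_
      refine mul_nonneg (abs_nonneg _) ?_
      have h := sq_nonneg (|u j| - α * |v i|)
      have hnn := div_nonneg (sq_nonneg (|u j| - α * |v i|)) hα.le
      have heq : (|u j| - α * |v i|) ^ 2 / α
          = 1 / α * u j ^ 2 + α * v i ^ 2 - 2 * |v i| * |u j| := by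
        field_simp
        ring_nf
        rw [sq_abs, sq_abs]
        ring
      linarith [heq ▸ hnn]
    have e1 : ∑ i, ∑ j, |C i j| * ((1/α) * u j ^ 2) ≤ ∑ j, A j j * u j ^ 2 := by
      rw [Finset.sum_comm]
      refine Finset.sum_le_sum fun j _ => ?_
      calc ∑ i, |C i j| * ((1/α) * u j ^ 2) = ((1/α) * ∑ i, |C i j|) * u j ^ 2 := by
            rw [← Finset.sum_mul]; ring
        _ ≤ A j j * u j ^ 2 := mul_le_mul_of_nonneg_right (h1 j) (sq_nonneg _)
    have e2 : ∑ i, ∑ j, |C i j| * (α * v i ^ 2) ≤ ∑ i, D i i * v i ^ 2 := by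
      refine Finset.sum_le_sum fun i _ => ?_
      calc ∑ j, |C i j| * (α * v i ^ 2) = (α * ∑ j, |C i j|) * v i ^ 2 := by
            rw [← Finset.sum_mul]; ring
        _ ≤ D i i * v i ^ 2 := mul_le_mul_of_nonneg_right (h2 i) (sq_nonneg _)
    have e3 : ∑ i, ∑ j, -(|C i j| * (2 * |v i| * |u j|)) ≤
        ∑ i, ∑ j, (C i j * v i * u j + C i j * v i * u j) := by
      refine Finset.sum_le_sum fun i _ => Finset.sum_le_sum fun j _ => ?_
      have : |C i j * v i * u j| ≤ |C i j| * |v i| * |u j| := by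
        rw [abs_mul, abs_mul]
      nlinarith [neg_abs_le (C i j * v i * u j)]
    have expand : ∑ i, ∑ j, |C i j| * ((1/α) * u j ^ 2 + α * v i ^ 2 - 2 * |v i| * |u j|)
        = ∑ i, ∑ j, |C i j| * ((1/α) * u j ^ 2) + ∑ i, ∑ j, |C i j| * (α * v i ^ 2)
          + ∑ i, ∑ j, -(|C i j| * (2 * |v i| * |u j|)) := by
      rw [← Finset.sum_add_distrib, ← Finset.sum_add_distrib]
      refine Finset.sum_congr rfl fun i _ => ?_
      rw [← Finset.sum_add_distrib, ← Finset.sum_add_distrib]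
      exact Finset.sum_congr rfl fun j _ => by ring
    rw [expand] at key
    have sum2 : ∑ i, ∑ j, (C i j * v i * u j + C i j * v i * u j)
        = ∑ i, ∑ j, C i j * v i * u j + ∑ i, ∑ j, C i j * v i * u j := by
      rw [← Finset.sum_add_distrib]
      exact Finset.sum_congr rfl fun i _ => Finset.sum_add_distrib
    rw [sum2] at e3
    linarith


end
end
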